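/- (a) For every t > −1, ∫_ℝ v(t,x) dx = u₊ − u₋, where v(t,x) := (1+t)^{−1/(p+1)}(max(A − B(x(1+t)^{−1/(p+1)})², 0))^{1/(p−1)}. (b) The contact wave U(t,x) := u₋ + ∫_{−∞}^x t^{−1/(p+1)}(max(A − B(y t^{−1/(p+1)})², 0))^{1/(p−1)} dy (t > 0) is continuously differentiable on (0,∞)×ℝ with ∂_x U(t,x) = t^{−1/(p+1)}(max(A − B(x t^{−1/(p+1)})², 0))^{1/(p−1)} ≥ 0, the function x ↦ (∂_x U(t,x))^p is continuously differentiable, and at every (t,x) with t > 0 and |x| ≠ √(A/B)·t^{1/(p+1)} one has ∂_t U(t,x) = μ·∂_x((∂_x U)^p)(t,x); moreover lim_{x→−∞} U(t,x) = u₋ and lim_{x→+∞} U(t,x) = u₊ for every t > 0. -/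

import Mathlib

open Real MeasureTheory Filter Set

noncomputable def gprof (p A B y : ℝ) : ℝ := (max (A - B * y^2) 0) ^ ((1:ℝ)/(p-1))

section
variable {p A B : ℝ} (hp : 1 < p) (hA : 0 < A) (hB : 0 < B)
include hp

lemma gprof_cont : Continuous (gprof p A B) := by
  exact ((continuous_const.sub (continuous_const.mul (continuous_pow 2))).max
    continuous_const).rpow_const (fun x => Or.inr (le_of_lt (div_pos one_pos (by linarith))))

omit hp in
lemma gprof_nonneg (y : ℝ) : 0 ≤ gprof p A B y := Real.rpow_nonneg (le_max_right _ _) _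

lemma gprof_eq_zero {y : ℝ} (h : A - B * y^2 ≤ 0) : gprof p A B y = 0 := by
  unfold gprof
  rw [max_eq_right h, Real.zero_rpow (ne_of_gt (div_pos one_pos (by linarith)))]

include hA hB

lemma gprof_supp {y : ℝ} (h : y ∉ Icc (-Real.sqrt (A/B)) (Real.sqrt (A/B))) :
    gprof p A B y = 0 := by
  apply gprof_eq_zero hp
  have hc2 : Real.sqrt (A/B) ^ 2 = A / B := Real.sq_sqrt (by positivity)
  have : A / B < y ^ 2 := by
    rw [mem_Icc, not_and_or] at h
    rcases h with h' | h'
    · push_neg at h'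
      calc A / B = Real.sqrt (A/B) ^ 2 := hc2.symm
        _ < y ^ 2 := by nlinarith [Real.sqrt_nonneg (A/B)]
    · push_neg at h'
      calc A / B = Real.sqrt (A/B) ^ 2 := hc2.symm
        _ < y ^ 2 := by nlinarith [Real.sqrt_nonneg (A/B)]
  nlinarith [this, (div_lt_iff₀ hB).mp this]

lemma gprof_integrable : Integrable (gprof p A B) := by
  apply (gprof_cont hp).integrable_of_hasCompactSupport
  exact HasCompactSupport.intro isCompact_Icc (fun y hy => gprof_supp hp hA hB hy)
include hp hA hB

lemma gprof_integral :
    ∫ y, gprof p A B y = 2 * A ^ ((p+1)/(2*(p-1))) * B ^ (-(1:ℝ)/2) *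
      ∫ θ in (0:ℝ)..(Real.pi/2), Real.sin θ ^ ((p+1)/(p-1)) := by
  have hp1 : (0:ℝ) < p - 1 := by linarith
  set c := Real.sqrt (A/B) with hc
  have hc0 : 0 < c := Real.sqrt_pos.mpr (by positivity)
  have hc2 : c ^ 2 = A / B := Real.sq_sqrt (by positivity)
  have hBc2 : B * c ^ 2 = A := by rw [hc2]; field_simp
  -- step A : reduce to interval integral
  have hsupp : Function.support (gprof p A B) ⊆ Ioc (-c) c := by
    intro y hy
    have hgy : gprof p A B y ≠ 0 := hy
    have h1 : 0 < A - B * y^2 := by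
      by_contra h
      push_neg at h
      apply hgy
      unfold gprof
      rw [max_eq_right h, Real.zero_rpow (ne_of_gt (div_pos one_pos hp1))]
    have h2 : y^2 < c^2 := by
      rw [hc2, lt_div_iff₀ hB]; nlinarith
    have habs : |y| < c := by
      have := Real.sqrt_lt_sqrt (sq_nonneg y) h2
      rwa [Real.sqrt_sq_eq_abs, Real.sqrt_sq hc0.le] at this
    exact ⟨(abs_lt.mp habs).1, (abs_lt.mp habs).2.le⟩
  rw [← intervalIntegral.integral_eq_integral_of_support_subset hsupp]
  -- step B : substitution y = c sin θ
  have hsub := intervalIntegral.integral_comp_smul_deriv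
    (f := fun θ => c * Real.sin θ) (f' := fun θ => c * Real.cos θ)
    (g := gprof p A B) (a := -(Real.pi/2)) (b := Real.pi/2)
    (fun θ _ => (Real.hasDerivAt_sin θ).const_mul c)
    (continuous_const.mul continuous_cos).continuousOn
    (by exact ((continuous_const.sub (continuous_const.mul (continuous_pow 2))).max
      continuous_const).rpow_const (fun x => Or.inr (le_of_lt (div_pos one_pos (by linarith)))))
  simp only [Real.sin_pi_div_two, Real.sin_neg, Real.sin_pi_div_two, Function.comp_apply] at hsub
  rw [show c * 1 = c by ring] at hsub
  rw [show c * -1 = -c by ring] at hsub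
  rw [← hsub]
  -- step C : simplify integrand on the interval
  have hcongr : ∀ θ ∈ uIcc (-(Real.pi/2)) (Real.pi/2),
      (c * Real.cos θ) • gprof p A B (c * Real.sin θ)
        = (c * A ^ ((1:ℝ)/(p-1))) * Real.cos θ ^ ((p+1)/(p-1)) := by
    intro θ hθ
    have hθ' : θ ∈ Icc (-(Real.pi/2)) (Real.pi/2) := by
      rwa [uIcc_of_le (by linarith [Real.pi_pos])] at hθ
    have hcos : 0 ≤ Real.cos θ := Real.cos_nonneg_of_mem_Icc hθ'
    have h1 : A - B * (c * Real.sin θ)^2 = A * Real.cos θ ^ 2 := by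
      have := Real.sin_sq_add_cos_sq θ
      nlinarith [hBc2]
    have h2 : gprof p A B (c * Real.sin θ)
        = A ^ ((1:ℝ)/(p-1)) * (Real.cos θ ^ 2) ^ ((1:ℝ)/(p-1)) := by
      unfold gprof
      rw [h1, max_eq_left (by positivity), Real.mul_rpow hA.le (by positivity)]
    rw [h2]
    rcases eq_or_lt_of_le hcos with h0 | h0
    · rw [← h0]
      simp [Real.zero_rpow (show ((p+1)/(p-1):ℝ) ≠ 0 by positivity)]
    · rw [← Real.rpow_natCast (Real.cos θ) 2, ← Real.rpow_mul hcos]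
      rw [smul_eq_mul]
      rw [show ((2:ℕ):ℝ) * ((1:ℝ)/(p-1)) = (p+1)/(p-1) - 1 by field_simp; ring]
      rw [Real.rpow_sub h0]
      rw [Real.rpow_one]
      field_simp
  rw [intervalIntegral.integral_congr hcongr]
  rw [intervalIntegral.integral_const_mul]
  -- step D : symmetry and cos→sin
  have hcos_cont : Continuous (fun θ : ℝ => Real.cos θ ^ ((p+1)/(p-1))) := by
    apply continuous_cos.rpow_const
    intro x; right; positivity
  have hint : ∀ a b : ℝ, IntervalIntegrable (fun θ : ℝ => Real.cos θ ^ ((p+1)/(p-1))) volume a b :=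
    fun a b => hcos_cont.intervalIntegrable a b
  have hsplit : (∫ θ in (-(Real.pi/2))..(Real.pi/2), Real.cos θ ^ ((p+1)/(p-1)))
      = (∫ θ in (-(Real.pi/2))..(0:ℝ), Real.cos θ ^ ((p+1)/(p-1)))
        + ∫ θ in (0:ℝ)..(Real.pi/2), Real.cos θ ^ ((p+1)/(p-1)) :=
    (intervalIntegral.integral_add_adjacent_intervals (hint _ _) (hint _ _)).symm
  have hneg : (∫ θ in (-(Real.pi/2))..(0:ℝ), Real.cos θ ^ ((p+1)/(p-1)))
      = ∫ θ in (0:ℝ)..(Real.pi/2), Real.cos θ ^ ((p+1)/(p-1)) := by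
    have := intervalIntegral.integral_comp_neg (a := (0:ℝ)) (b := Real.pi/2)
      (fun θ : ℝ => Real.cos θ ^ ((p+1)/(p-1)))
    simp only [Real.cos_neg, neg_zero] at this
    rw [← this]
  have hcs : (∫ θ in (0:ℝ)..(Real.pi/2), Real.cos θ ^ ((p+1)/(p-1)))
      = ∫ θ in (0:ℝ)..(Real.pi/2), Real.sin θ ^ ((p+1)/(p-1)) := by
    have := intervalIntegral.integral_comp_sub_left (a := (0:ℝ)) (b := Real.pi/2)
      (fun θ : ℝ => Real.sin θ ^ ((p+1)/(p-1))) (Real.pi/2)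
    simp only [Real.sin_pi_div_two_sub, sub_zero, sub_self] at this
    rw [← this]
  rw [hsplit, hneg, hcs]
  -- step E : constants
  have hcA : c * A ^ ((1:ℝ)/(p-1)) = A ^ ((p+1)/(2*(p-1))) * B ^ (-(1:ℝ)/2) := by
    rw [hc, Real.sqrt_eq_rpow, Real.div_rpow hA.le hB.le,
      show (-(1:ℝ)/2) = -(1/2) by ring, Real.rpow_neg hB.le]
    rw [div_eq_mul_inv, mul_assoc, mul_comm (B ^ ((1:ℝ)/2))⁻¹ _, ← mul_assoc,
      ← Real.rpow_add hA]
    congr 2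
    field_simp
    ring
  rw [hcA]
  ring

omit hp hA hB in
lemma integral_comp_mul_right_Iio (g : ℝ → ℝ) (a : ℝ) {b : ℝ} (hb : 0 < b) :
    (∫ x in Iio a, g (x * b)) = b⁻¹ • ∫ x in Iio (a * b), g x := by
  have h1 : ∀ x : ℝ, (Iio a).indicator (fun y => g (y * b)) x = (Iio (a*b)).indicator g (x * b) := by
    intro x
    by_cases hx : x < a
    · rw [indicator_of_mem (mem_Iio.mpr hx), indicator_of_mem (mem_Iio.mpr ((mul_lt_mul_iff_of_pos_right hb).mpr hx))]
    · rw [indicator_of_notMem (fun h => hx (mem_Iio.mp h)),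
        indicator_of_notMem (fun hmem => hx ((mul_lt_mul_iff_of_pos_right hb).mp (mem_Iio.mp hmem)))]
  rw [← integral_indicator measurableSet_Iio, ← integral_indicator measurableSet_Iio]
  calc ∫ x, (Iio a).indicator (fun y => g (y*b)) x
      = ∫ x, (Iio (a*b)).indicator g (x*b) := by simp_rw [h1]
    _ = |b⁻¹| • ∫ x, (Iio (a*b)).indicator g x :=
        MeasureTheory.Measure.integral_comp_mul_right _ b
    _ = b⁻¹ • ∫ x, (Iio (a*b)).indicator g x := by rw [abs_of_pos (inv_pos.mpr hb)]

end

noncomputable def Fprof (p A B z : ℝ) : ℝ := ∫ y in Iio z, gprof p A B y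

section
variable {p A B : ℝ} (hp : 1 < p) (hA : 0 < A) (hB : 0 < B)
include hp hA hB

lemma Fprof_hasDerivAt (z : ℝ) : HasDerivAt (Fprof p A B) (gprof p A B z) z := by
  have hint := gprof_integrable hp hA hB
  have key : ∀ w, Fprof p A B w = Fprof p A B 0 + ∫ y in (0:ℝ)..w, gprof p A B y := by
    intro w
    have h1 : ∀ u : ℝ, ∫ y in Iio u, gprof p A B y = ∫ y in Iic u, gprof p A B y :=
      fun u => setIntegral_congr_set Iio_ae_eq_Iic
    rw [Fprof, Fprof, h1, h1,
      ← intervalIntegral.integral_Iic_sub_Iic hint.integrableOn hint.integrableOn]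
    ring
  have hD : HasDerivAt (fun w => Fprof p A B 0 + ∫ y in (0:ℝ)..w, gprof p A B y)
      (gprof p A B z) z := by
    apply HasDerivAt.const_add
    exact intervalIntegral.integral_hasDerivAt_right (hint.intervalIntegrable)
      ⟨univ, univ_mem, (gprof_cont hp).aestronglyMeasurable.restrict⟩
      (gprof_cont hp).continuousAt
  exact hD.congr_of_eventuallyEq (Eventually.of_forall key)

lemma Fprof_contDiff : ContDiff ℝ 1 (Fprof p A B) := by
  rw [contDiff_one_iff_deriv]
  refine ⟨fun z => (Fprof_hasDerivAt hp hA hB z).differentiableAt, ?_⟩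
  rw [show deriv (Fprof p A B) = gprof p A B from
    funext fun z => (Fprof_hasDerivAt hp hA hB z).deriv]
  exact gprof_cont hp

lemma Fprof_eq_zero {z : ℝ} (hz : z ≤ -Real.sqrt (A/B)) : Fprof p A B z = 0 := by
  have hc2 : Real.sqrt (A/B) ^ 2 = A/B := Real.sq_sqrt (by positivity)
  have heq : EqOn (gprof p A B) (fun _ => (0:ℝ)) (Iio z) := by
    intro y hy
    apply gprof_eq_zero hp
    have hy' : y ≤ -Real.sqrt (A/B) := le_trans (le_of_lt hy) hz
    have hy2 : Real.sqrt (A/B) ^ 2 ≤ y ^ 2 := by nlinarith [Real.sqrt_nonneg (A/B)]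
    have hAB : A = B * Real.sqrt (A/B) ^ 2 := by rw [hc2]; field_simp
    nlinarith
  rw [Fprof, setIntegral_congr_fun measurableSet_Iio heq, integral_zero]

lemma Fprof_eq_mass {z : ℝ} (hz : Real.sqrt (A/B) ≤ z) :
    Fprof p A B z = ∫ y, gprof p A B y := by
  have hint := gprof_integrable hp hA hB
  have h2 : ∫ y in Ici z, gprof p A B y = 0 := by
    have hc2 : Real.sqrt (A/B) ^ 2 = A/B := Real.sq_sqrt (by positivity)
    have heq : EqOn (gprof p A B) (fun _ => (0:ℝ)) (Ici z) := by
      intro y hy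
      apply gprof_eq_zero hp
      have hy' : Real.sqrt (A/B) ≤ y := le_trans hz hy
      have hy2 : Real.sqrt (A/B) ^ 2 ≤ y ^ 2 := by nlinarith [Real.sqrt_nonneg (A/B)]
      have hAB : A = B * Real.sqrt (A/B) ^ 2 := by rw [hc2]; field_simp
      nlinarith
    rw [setIntegral_congr_fun measurableSet_Ici heq, integral_zero]
  rw [← intervalIntegral.integral_Iio_add_Ici hint.integrableOn hint.integrableOn, h2, add_zero]
  rfl
end

/-- The Barenblatt-type profile `v(t,x) = t^{-1/(p+1)} (max(A - B(x t^{-1/(p+1)})², 0))^{1/(p-1)}`,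
the spatial derivative of the contact wave for `p`-Laplacian type viscosity. -/
noncomputable def vfun (p A B t x : ℝ) : ℝ :=
  t ^ (-(1:ℝ)/(p+1)) * (max (A - B * (x * t ^ (-(1:ℝ)/(p+1)))^2) 0) ^ ((1:ℝ)/(p-1))

/-- The contact wave for `p`-Laplacian type viscosity,
`U(t,x) = u₋ + ∫_{-∞}^x t^{-1/(p+1)} (max(A - B(y t^{-1/(p+1)})², 0))^{1/(p-1)} dy`. -/
noncomputable def Ucw (p A B um t x : ℝ) : ℝ :=
  um + ∫ y in Set.Iio x, vfun p A B t y

lemma vfun_eq (p A B t y : ℝ) :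
    vfun p A B t y = t ^ (-(1:ℝ)/(p+1)) * gprof p A B (y * t ^ (-(1:ℝ)/(p+1))) := rfl

lemma Ucw_eq (p A B um : ℝ) {t : ℝ} (ht : 0 < t) (x : ℝ) :
    Ucw p A B um t x = um + Fprof p A B (x * t ^ (-(1:ℝ)/(p+1))) := by
  have hb : (0:ℝ) < t ^ (-(1:ℝ)/(p+1)) := Real.rpow_pos_of_pos ht _
  rw [Ucw]
  congr 1
  calc ∫ y in Iio x, vfun p A B t y
      = ∫ y in Iio x, t ^ (-(1:ℝ)/(p+1)) • gprof p A B (y * t ^ (-(1:ℝ)/(p+1))) := by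
        simp only [smul_eq_mul]; rfl
    _ = t ^ (-(1:ℝ)/(p+1)) • ∫ y in Iio x, gprof p A B (y * t ^ (-(1:ℝ)/(p+1))) :=
        integral_smul _ _
    _ = t ^ (-(1:ℝ)/(p+1)) • ((t ^ (-(1:ℝ)/(p+1)))⁻¹ • Fprof p A B (x * t ^ (-(1:ℝ)/(p+1)))) := by
        rw [integral_comp_mul_right_Iio _ _ hb]; rfl
    _ = Fprof p A B (x * t ^ (-(1:ℝ)/(p+1))) := by
        rw [smul_smul, mul_inv_cancel₀ hb.ne', one_smul]

lemma max_rpow_hasDerivAt {q : ℝ} (hq : 1 < q) (r : ℝ) :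
    HasDerivAt (fun r : ℝ => max r 0 ^ q) (q * max r 0 ^ (q - 1)) r := by
  rcases lt_trichotomy r 0 with hr | hr | hr
  · rw [show q * max r 0 ^ (q-1) = 0 by
      rw [max_eq_right hr.le, Real.zero_rpow (sub_ne_zero.mpr hq.ne')]; ring]
    exact (hasDerivAt_const r ((0:ℝ)^q)).congr_of_eventuallyEq
      ((eventually_lt_nhds hr).mono fun y hy => by show (max y 0)^q = ((0:ℝ))^q; rw [max_eq_right hy.le])
  · subst hr
    rw [show q * max 0 0 ^ (q-1) = 0 by
      rw [max_self, Real.zero_rpow (sub_ne_zero.mpr hq.ne')]; ring]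
    rw [hasDerivAt_iff_tendsto_slope]
    apply squeeze_zero_norm (a := fun x => |x| ^ (q-1))
    · intro x
      rcases le_or_gt x 0 with hx | hx
      · have : slope (fun r : ℝ => max r 0 ^ q) 0 x = 0 := by
          rw [slope_def_field]
          rw [max_eq_right hx, max_self, Real.zero_rpow (by linarith)]
          simp
        rw [this]
        simp [Real.rpow_nonneg (abs_nonneg x)]
      · have : slope (fun r : ℝ => max r 0 ^ q) 0 x = x ^ (q-1) := by
          rw [slope_def_field]
          rw [max_eq_left hx.le, max_self, Real.zero_rpow (by linarith)]
          rw [Real.rpow_sub_one hx.ne']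
          field_simp
          ring
        rw [this, Real.norm_eq_abs, abs_of_nonneg (Real.rpow_nonneg hx.le _),
          abs_of_pos hx]
    · have hcont : ContinuousAt (fun x : ℝ => |x| ^ (q-1)) 0 := by
        apply ContinuousAt.rpow_const continuous_abs.continuousAt
        right; linarith
      have h0 : |(0:ℝ)| ^ (q-1) = 0 := by
        rw [abs_zero, Real.zero_rpow (by linarith)]
      have := hcont.tendsto
      rw [h0] at this
      exact this.mono_left nhdsWithin_le_nhds
  · have h1 := Real.hasDerivAt_rpow_const (x := r) (p := q) (Or.inl hr.ne')
    rw [show q * max r 0 ^ (q-1) = q * r ^ (q-1) by rw [max_eq_left hr.le]]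
    exact h1.congr_of_eventuallyEq
      ((eventually_gt_nhds hr).mono fun y hy => by show (max y 0)^q = y^q; rw [max_eq_left hy.le])

lemma max_rpow_contDiff {q : ℝ} (hq : 1 < q) :
    ContDiff ℝ 1 (fun r : ℝ => max r 0 ^ q) := by
  rw [contDiff_one_iff_deriv]
  refine ⟨fun r => (max_rpow_hasDerivAt hq r).differentiableAt, ?_⟩
  rw [show deriv (fun r : ℝ => max r 0 ^ q) = fun r => q * max r 0 ^ (q - 1) from
    funext fun r => (max_rpow_hasDerivAt hq r).deriv]
  exact continuous_const.mul ((continuous_id.max continuous_const).rpow_const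
    fun x => Or.inr (by linarith))


theorem stmt_9 (p μ um up A B : ℝ)
    (hp : 1 < p) (hμ : 0 < μ) (hu : um < up)
    (hB : B = (p - 1) / (2 * μ * p * (p + 1))) (hA : 0 < A)
    (hnorm : 2 * A ^ ((p+1)/(2*(p-1))) * B ^ (-(1:ℝ)/2) *
      (∫ θ in (0:ℝ)..(Real.pi/2), Real.sin θ ^ ((p+1)/(p-1))) = up - um) :
    -- (a) total mass of the Barenblatt profile
    (∀ t : ℝ, -1 < t → (∫ x : ℝ, vfun p A B (1 + t) x) = up - um) ∧
    -- (b) regularity, spatial derivative, the p-Laplacian equation, and far-field limits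
    (ContDiffOn ℝ 1 (fun q : ℝ × ℝ => Ucw p A B um q.1 q.2) (Set.Ioi (0:ℝ) ×ˢ Set.univ) ∧
     (∀ t : ℝ, 0 < t → ∀ x : ℝ,
        HasDerivAt (fun y => Ucw p A B um t y) (vfun p A B t x) x ∧ 0 ≤ vfun p A B t x) ∧
     (∀ t : ℝ, 0 < t → ContDiff ℝ 1 (fun x => vfun p A B t x ^ p)) ∧
     (∀ t x : ℝ, 0 < t → |x| ≠ Real.sqrt (A / B) * t ^ ((1:ℝ)/(p+1)) →
        deriv (fun s => Ucw p A B um s x) t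
          = μ * deriv (fun y => vfun p A B t y ^ p) x) ∧
     (∀ t : ℝ, 0 < t →
        Tendsto (fun x => Ucw p A B um t x) atBot (nhds um) ∧
        Tendsto (fun x => Ucw p A B um t x) atTop (nhds up))) := by
  have hp0 : (0:ℝ) < p := by linarith
  have hp1 : (0:ℝ) < p - 1 := by linarith
  have hB0 : 0 < B := by
    rw [hB]
    exact div_pos hp1
      (mul_pos (mul_pos (mul_pos two_pos hμ) hp0) (by linarith : (0:ℝ) < p + 1))
  have hq : 1 < p / (p - 1) := (one_lt_div hp1).mpr (by linarith)
  have hM : (∫ y, gprof p A B y) = up - um := by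
    rw [gprof_integral hp hA hB0]; exact hnorm
  refine ⟨?_, ?_, ?_, ?_, ?_, ?_⟩
  · -- (a)
    intro t ht
    have ht1 : (0:ℝ) < 1 + t := by linarith
    set b := (1+t) ^ (-(1:ℝ)/(p+1)) with hbdef
    have hb : 0 < b := Real.rpow_pos_of_pos ht1 _
    calc ∫ x, vfun p A B (1+t) x
        = ∫ x, b • gprof p A B (x * b) := by simp only [smul_eq_mul]; rfl
      _ = b • ∫ x, gprof p A B (x * b) := integral_smul _ _
      _ = b • (|b⁻¹| • ∫ y, gprof p A B y) := by
          rw [MeasureTheory.Measure.integral_comp_mul_right]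
      _ = up - um := by
          rw [abs_of_pos (inv_pos.mpr hb), smul_smul, mul_inv_cancel₀ hb.ne', one_smul, hM]
  · -- (b1) joint C¹
    apply ContDiffOn.congr
      (f := fun z : ℝ × ℝ => um + Fprof p A B (z.2 * z.1 ^ (-(1:ℝ)/(p+1))))
    · apply ContDiffOn.add contDiffOn_const
      apply (Fprof_contDiff hp hA hB0).comp_contDiffOn
      intro z hz
      have hz1 : (0:ℝ) < z.1 := hz.1
      exact (contDiffAt_snd.mul
        ((Real.contDiffAt_rpow_const_of_ne hz1.ne').comp z contDiffAt_fst)).contDiffWithinAt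
    · intro z hz
      exact Ucw_eq p A B um (hz.1 : (0:ℝ) < z.1) z.2
  · -- (b2) spatial derivative
    intro t ht x
    set b := t ^ (-(1:ℝ)/(p+1)) with hbdef
    have hb : 0 < b := Real.rpow_pos_of_pos ht _
    constructor
    · have hFd := Fprof_hasDerivAt hp hA hB0 (x * b)
      have hinner : HasDerivAt (fun y : ℝ => y * b) b x := hasDerivAt_mul_const b
      have h := ((hFd.comp x hinner).const_add um).congr_of_eventuallyEq
        (Eventually.of_forall fun y => Ucw_eq p A B um ht y)
      rw [vfun_eq, mul_comm]
      exact h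
    · rw [vfun_eq]
      exact mul_nonneg hb.le (gprof_nonneg _)
  · -- (b3) regularity of flux
    intro t ht
    set b := t ^ (-(1:ℝ)/(p+1)) with hbdef
    have hb : 0 < b := Real.rpow_pos_of_pos ht _
    have key : (fun x => vfun p A B t x ^ p)
        = fun x => b ^ p * (fun r : ℝ => max r 0 ^ (p/(p-1))) (A - B * (x*b)^2) := by
      funext x
      show (b * (max (A - B * (x*b)^2) 0) ^ ((1:ℝ)/(p-1))) ^ p = _
      rw [Real.mul_rpow hb.le (Real.rpow_nonneg (le_max_right _ _) _),
        ← Real.rpow_mul (le_max_right _ _), div_mul_eq_mul_div, one_mul]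
    rw [key]
    exact contDiff_const.mul ((max_rpow_contDiff hq).comp
      (contDiff_const.sub (contDiff_const.mul ((contDiff_id.mul contDiff_const).pow 2))))
  · -- (b4) the equation
    intro t x ht _
    set b := t ^ (-(1:ℝ)/(p+1)) with hbdef
    have hb : 0 < b := Real.rpow_pos_of_pos ht _
    have key : (fun x => vfun p A B t x ^ p)
        = fun x => b ^ p * (fun r : ℝ => max r 0 ^ (p/(p-1))) (A - B * (x*b)^2) := by
      funext x
      show (b * (max (A - B * (x*b)^2) 0) ^ ((1:ℝ)/(p-1))) ^ p = _
      rw [Real.mul_rpow hb.le (Real.rpow_nonneg (le_max_right _ _) _),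
        ← Real.rpow_mul (le_max_right _ _), div_mul_eq_mul_div, one_mul]
    -- time derivative
    have hev : (fun s => Ucw p A B um s x)
        =ᶠ[nhds t] fun s => um + Fprof p A B (x * s ^ (-(1:ℝ)/(p+1))) := by
      filter_upwards [eventually_gt_nhds ht] with s hs using Ucw_eq p A B um hs x
    rw [hev.deriv_eq]
    have hR : HasDerivAt (fun s : ℝ => s ^ (-(1:ℝ)/(p+1)))
        ((-(1:ℝ)/(p+1)) * t ^ ((-(1:ℝ)/(p+1)) - 1)) t :=
      Real.hasDerivAt_rpow_const (Or.inl ht.ne')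
    have hcomp : HasDerivAt (fun s => um + Fprof p A B (x * s ^ (-(1:ℝ)/(p+1))))
        (gprof p A B (x * b) * (x * ((-(1:ℝ)/(p+1)) * t ^ ((-(1:ℝ)/(p+1)) - 1)))) t :=
      ((Fprof_hasDerivAt hp hA hB0 _).comp t (hR.const_mul x)).const_add um
    rw [hcomp.deriv]
    -- space derivative of flux
    have hpoly : HasDerivAt (fun y : ℝ => A - B * (y*b)^2)
        (-(B * ((2:ℕ) * (x*b)^(2-1) * b))) x :=
      (((hasDerivAt_mul_const b).pow 2).const_mul B).const_sub A
    have hder2 : HasDerivAt (fun y => vfun p A B t y ^ p)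
        (b ^ p * ((p/(p-1) * max (A - B*(x*b)^2) 0 ^ (p/(p-1) - 1))
          * (-(B * ((2:ℕ) * (x*b)^(2-1) * b))))) x := by
      have h := (((max_rpow_hasDerivAt hq (A - B*(x*b)^2)).comp x hpoly).const_mul (b ^ p))
      exact h.congr_of_eventuallyEq (Eventually.of_forall fun y => congrFun key y)
    rw [hder2.deriv]
    -- algebra
    have hq1 : p/(p-1) - 1 = 1/(p-1) := by field_simp; ring
    have hrel : b ^ p * b * b = t ^ ((-(1:ℝ)/(p+1)) - 1) := by
      have h1 : p + (1:ℝ) ≠ 0 := by positivity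
      rw [hbdef, ← Real.rpow_mul ht.le, ← Real.rpow_add ht, ← Real.rpow_add ht]
      congr 1
      field_simp
      ring
    have hcoef : (-(1:ℝ)/(p+1)) = μ * (p/(p-1)) * B * (-2) := by
      rw [hB]; field_simp
    show gprof p A B (x * b) * (x * ((-(1:ℝ)/(p+1)) * t ^ ((-(1:ℝ)/(p+1)) - 1))) = _
    rw [show gprof p A B (x * b) = max (A - B*(x*b)^2) 0 ^ ((1:ℝ)/(p-1)) from rfl,
      hq1, ← hrel, hcoef]
    push_cast
    ring
  · -- (b5) limits
    intro t ht
    set b := t ^ (-(1:ℝ)/(p+1)) with hbdef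
    have hb : 0 < b := Real.rpow_pos_of_pos ht _
    set c := Real.sqrt (A/B) with hcdef
    constructor
    · have hev : (fun _ : ℝ => um) =ᶠ[atBot] fun x => Ucw p A B um t x := by
        filter_upwards [eventually_le_atBot (-c / b)] with x hx
        have hxb : x * b ≤ -c := by
          calc x * b ≤ (-c/b) * b := mul_le_mul_of_nonneg_right hx hb.le
            _ = -c := div_mul_cancel₀ _ hb.ne'
        rw [Ucw_eq p A B um ht x, ← hbdef, Fprof_eq_zero hp hA hB0 hxb, add_zero]
      exact Filter.Tendsto.congr' hev tendsto_const_nhds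
    · have hev : (fun _ : ℝ => up) =ᶠ[atTop] fun x => Ucw p A B um t x := by
        filter_upwards [eventually_ge_atTop (c / b)] with x hx
        have hxb : c ≤ x * b := by
          calc c = (c/b) * b := (div_mul_cancel₀ _ hb.ne').symm
            _ ≤ x * b := mul_le_mul_of_nonneg_right hx hb.le
        rw [Ucw_eq p A B um ht x, ← hbdef, Fprof_eq_mass hp hA hB0 hxb, hM]
        ring
      exact Filter.Tendsto.congr' hev tendsto_const_nhds
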